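/- Let q ∈ [0,1), m ∈ ℤ_{≥0}, and μ, ν ∈ ℝ with ν q^i ≠ 1 for all integers 0 ≤ i ≤ m−1 (so that (ν;q)_m ≠ 0). Then ∑_{j=0}^{m} φ_{q,μ,ν}(j|m) = 1. -/

import Mathlib

open scoped BigOperators

noncomputable section

/-- q-Pochhammer symbol `(a;q)_k` for integer `k`, with the convention
`(a;q)_k = 1/((a/q;1/q)_{-k})` for `k ≤ -1`. -/
def qPoch (a q : ℝ) (k : ℤ) : ℝ :=
  if 0 ≤ k then ∏ i ∈ Finset.range k.toNat, (1 - a * q ^ i)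
  else 1 / ∏ i ∈ Finset.range (-k).toNat, (1 - (a / q) * (1 / q) ^ i)

/-- Infinite q-Pochhammer symbol `(a;q)_∞`. -/
def qPochInf (a q : ℝ) : ℝ := ∏' i : ℕ, (1 - a * q ^ i)

/-- q-beta-binomial weight `φ_{q,μ,ν}(j|m)` (equal to `0` for `j > m`). -/
def phiBB (q μ ν : ℝ) (j m : ℕ) : ℝ :=
  if j ≤ m then
    (∏ i ∈ Finset.range j, (μ - ν * q ^ i)) * qPoch μ q ((m : ℤ) - (j : ℤ)) * qPoch q q (m : ℤ)
      / (qPoch ν q (m : ℤ) * qPoch q q (j : ℤ) * qPoch q q ((m : ℤ) - (j : ℤ)))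
  else 0

/-- q-beta-binomial weight `φ_{q,μ,ν}(j|∞)`. -/
def phiBBInf (q μ ν : ℝ) (j : ℕ) : ℝ :=
  (∏ i ∈ Finset.range j, (μ - ν * q ^ i)) * qPochInf μ q
    / (qPoch q q (j : ℤ) * qPochInf ν q)

/-- Regularized terminating basic hypergeometric sum
`{}_{r+1}φ̄_r(q^{-n}; a_1,…,a_r; b_1,…,b_r | q, z)`. -/
def qHypReg (q z : ℝ) (n : ℕ) (a b : List ℝ) : ℝ :=
  ∑ k ∈ Finset.range (n + 1),
    z ^ k * (qPoch (q ^ (-(n : ℤ))) q (k : ℤ) / qPoch q q (k : ℤ))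
      * ((a.map fun x => qPoch x q (k : ℤ)).prod)
      * ((b.map fun x => qPoch (x * q ^ k) q ((n : ℤ) - (k : ℤ))).prod)

/-- Stochastic higher spin six vertex weight `L^{(J)}_{u,s}(i₁,j₁;i₂,j₂)`. -/
def Lw (q u s : ℝ) (J : ℕ) (i1 j1 i2 j2 : ℕ) : ℝ :=
  (if i1 + j1 = i2 + j2 then (1 : ℝ) else 0) *
    ((-1 : ℝ) ^ i1 * q ^ (((i1 : ℤ) * ((i1 : ℤ) + 2 * (j1 : ℤ) - 1)) / 2) * u ^ i1
      * s ^ ((j1 : ℤ) + (j2 : ℤ) - (i2 : ℤ)) * qPoch (u / s) q ((j2 : ℤ) - (i1 : ℤ)))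
    / (qPoch q q (i2 : ℤ) * qPoch (s * u) q ((i2 : ℤ) + (j2 : ℤ))
        * qPoch (q ^ ((J : ℤ) + 1 - (j1 : ℤ))) q ((j1 : ℤ) - (j2 : ℤ)))
    * qHypReg q q i2
        [q ^ (-(i1 : ℤ)), s * u * q ^ J, q * s / u]
        [s ^ 2, q ^ (1 + (j2 : ℤ) - (i1 : ℤ)), q ^ ((J : ℤ) + 1 - (i2 : ℤ) - (j2 : ℤ))]

/-- Cross vertex weight `R_{z,s₁,s₂}(i₁,i₂;j₁,j₂)`. -/
def Rw (q z s1 s2 : ℝ) (i1 i2 j1 j2 : ℕ) : ℝ :=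
  (if j1 + i2 = i1 + j2 then (1 : ℝ) else 0) *
    ((-(s1 * z)) ^ j1 * q ^ (((j1 : ℤ) * ((j1 : ℤ) + 2 * (i2 : ℤ) - 1)) / 2)
      * s2 ^ ((i2 : ℤ) + (j2 : ℤ) - (i1 : ℤ)) * qPoch (z * s1 / s2) q ((j2 : ℤ) - (j1 : ℤ)))
    / (qPoch q q (i1 : ℤ) * qPoch (z * s1 * s2) q ((i1 : ℤ) + (j2 : ℤ))
        * qPoch (s1 ^ (-2 : ℤ) * q ^ (1 - (i2 : ℤ))) q ((i2 : ℤ) - (j2 : ℤ)))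
    * qHypReg q q i1
        [q ^ (-(j1 : ℤ)), z * s2 / s1, q * s2 / (z * s1)]
        [s2 ^ 2, q ^ (1 + (j2 : ℤ) - (j1 : ℤ)), s1 ^ (-2 : ℤ) * q ^ (1 - (i1 : ℤ) - (j2 : ℤ))]

/-- Boundary cross vertex weight `R^{bdry}_{z,s₁,s₂}(j₁,j₂)`. -/
def Rbdry (q z s1 s2 : ℝ) (j1 j2 : ℕ) : ℝ :=
  ((-1 : ℝ) ^ j1 * q ^ (j1 * (j1 - 1) / 2) * s2 ^ (2 * j2)
      * qPoch (s1 * z / s2) q ((j2 : ℤ) - (j1 : ℤ)))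
    / (qPoch q q (j2 : ℤ) * qPoch (s2 ^ 2) q (j1 : ℤ))
    * (qPochInf (s2 ^ 2) q / qPochInf (z * s1 * s2) q)
    * qHypReg q q j1
        [z * s2 / s1, q ^ ((j2 : ℤ) - (j1 : ℤ)) * z * s1 / s2]
        [q ^ ((j2 : ℤ) - (j1 : ℤ) + 1), q ^ (1 - (j1 : ℤ)) * z / (s1 * s2)]

/-- Auxiliary `q = 0` cross vertex weight `R̂^{(0)}_{z,s₁,s₂}(i₁,i₂;j₁,j₂)`. -/
def Rhat0 (z s1 s2 : ℝ) (i1 i2 j1 j2 : ℕ) : ℝ :=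
  (if i1 + j2 = i2 + j1 then (1 : ℝ) else 0) *
    (z ^ j1 * (s1 * s2) ^ (-(j1 : ℤ)) * s2 ^ (2 * j2)) *
    ( ((1 - z * s1 / s2 * (if j1 < j2 then (1 : ℝ) else 0))
        * (1 - s2 ^ 2 * (if 0 < i1 then (1 : ℝ) else 0))
        * (1 - s1 ^ 2 * (if i2 = 0 then (1 : ℝ) else 0) * (if 0 < j1 then (1 : ℝ) else 0)))
      / (1 - z * s1 * s2 * (if 0 < i1 + j2 then (1 : ℝ) else 0))
      - (if i1 = i2 ∧ 0 < i1 then (1 : ℝ) else 0) * (if 0 < j1 then (1 : ℝ) else 0)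
          * ((-s1) * (s2 * z - s1) / (1 - z * s1 * s2)) )

/-- The `q = 0` cross vertex weight `R^{(0)}_{z,s₁,s₂}(i₁,i₂;j₁,j₂)`. -/
def R0 (z s1 s2 : ℝ) (i1 i2 j1 j2 : ℕ) : ℝ :=
  if j1 ≤ j2 then Rhat0 z s1 s2 i1 i2 j1 j2
  else z ^ ((j2 : ℤ) - (i2 : ℤ)) * s2 ^ (i2 + j2) * s1 ^ (-(i1 : ℤ) - (j1 : ℤ))
        * Rhat0 z s2 s1 j2 j1 i2 i1

/-- Auxiliary `q = 0` boundary cross vertex weight `R̂^{bdry,(0)}_{z,s₁,s₂}(j₁,j₂)`. -/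
def RbdryHat0 (z s1 s2 : ℝ) (j1 j2 : ℕ) : ℝ :=
  (z ^ j1 * (s1 * s2) ^ (-(j1 : ℤ)) * s2 ^ (2 * j2) / (1 - z * s1 * s2)) *
    ((1 - z * s1 / s2 * (if j1 < j2 then (1 : ℝ) else 0)) * (1 - s2 ^ 2)
      + (z * s1 * s2 - s1 ^ 2) * (if j1 = j2 ∧ 0 < j1 then (1 : ℝ) else 0))

/-- The `q = 0` boundary cross vertex weight `R^{bdry,(0)}_{z,s₁,s₂}(j₁,j₂)`. -/
def Rbdry0 (z s1 s2 : ℝ) (j1 j2 : ℕ) : ℝ :=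
  if j1 ≤ j2 then RbdryHat0 z s1 s2 j1 j2
  else (s2 ^ (2 * j2) * s1 ^ (-(2 * (j1 : ℤ)))
        / (1 - s1 ^ 2 * (if j2 = 0 then (1 : ℝ) else 0))) * RbdryHat0 z s2 s1 j2 j1

/-- Terminating basic hypergeometric series `{}_4φ_3`. -/
def qHyp4phi3 (q z : ℝ) (n : ℕ) (a1 a2 a3 b1 b2 b3 : ℝ) : ℝ :=
  ∑ k ∈ Finset.range (n + 1),
    (qPoch (q ^ (-(n : ℤ))) q (k : ℤ) * qPoch a1 q (k : ℤ) * qPoch a2 q (k : ℤ)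
        * qPoch a3 q (k : ℤ))
      / (qPoch q q (k : ℤ) * qPoch b1 q (k : ℤ) * qPoch b2 q (k : ℤ) * qPoch b3 q (k : ℤ))
      * z ^ k


namespace PhiAux

/-- `(q;q)_n` -/
def E (q : ℝ) (n : ℕ) : ℝ := ∏ i ∈ Finset.range n, (1 - q ^ (i + 1))

lemma one_sub_pow_ne {q : ℝ} (hq0 : 0 ≤ q) (hq1 : q < 1) (n : ℕ) :
    (1 : ℝ) - q ^ (n + 1) ≠ 0 := by
  have : q ^ (n + 1) < 1 := pow_lt_one₀ hq0 hq1 (Nat.succ_ne_zero n)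
  linarith

lemma E_ne_zero {q : ℝ} (hq0 : 0 ≤ q) (hq1 : q < 1) (n : ℕ) : E q n ≠ 0 := by
  refine Finset.prod_ne_zero_iff.2 fun i _ => one_sub_pow_ne hq0 hq1 i

/-- q-binomial coefficient (as a real number). -/
def qb (q : ℝ) (m j : ℕ) : ℝ := E q m / (E q j * E q (m - j))

lemma E_succ (q : ℝ) (n : ℕ) : E q (n + 1) = E q n * (1 - q ^ (n + 1)) :=
  Finset.prod_range_succ _ _

lemma pascal {q : ℝ} (hq0 : 0 ≤ q) (hq1 : q < 1) (i k : ℕ) :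
    qb q (i + k + 2) (i + 1)
      = qb q (i + k + 1) (i + 1) + q ^ (k + 1) * qb q (i + k + 1) i := by
  have e1 : i + k + 2 - (i + 1) = k + 1 := by omega
  have e2 : i + k + 1 - (i + 1) = k := by omega
  have e3 : i + k + 1 - i = k + 1 := by omega
  unfold qb
  rw [e1, e2, e3, show i + k + 2 = (i + k + 1) + 1 from rfl, E_succ q (i + k + 1),
    E_succ q i, E_succ q k]
  have h1 := E_ne_zero hq0 hq1 (i + k + 1)
  have h2 := E_ne_zero hq0 hq1 i
  have h3 := E_ne_zero hq0 hq1 k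
  have h4 := one_sub_pow_ne hq0 hq1 i
  have h5 := one_sub_pow_ne hq0 hq1 k
  field_simp
  ring

lemma key (q μ ν : ℝ) (hq0 : 0 ≤ q) (hq1 : q < 1) (m : ℕ) :
    ∑ j ∈ Finset.range (m + 1),
      (∏ i ∈ Finset.range j, (μ - ν * q ^ i)) *
        (∏ i ∈ Finset.range (m - j), (1 - μ * q ^ i)) * qb q m j
      = ∏ i ∈ Finset.range m, (1 - ν * q ^ i) := by
  set A : ℕ → ℝ := fun j => ∏ i ∈ Finset.range j, (μ - ν * q ^ i) with hA
  set Bf : ℕ → ℝ := fun r => ∏ i ∈ Finset.range r, (1 - μ * q ^ i) with hB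
  induction m with
  | zero => simp [qb, E, hA, hB]
  | succ m ih =>
    -- split each term via the q-Pascal rule
    have hsplit : ∀ j ∈ Finset.range (m + 2),
        A j * Bf (m + 1 - j) * qb q (m + 1) j
          = (if j ≤ m then A j * Bf (m + 1 - j) * qb q m j else 0)
            + (if 1 ≤ j then A j * Bf (m + 1 - j) * (q ^ (m + 1 - j) * qb q m (j - 1))
               else 0) := by
      intro j hj
      have hj2 : j ≤ m + 1 := by simpa [Nat.lt_succ_iff] using hj
      have hqb0 : ∀ n, qb q n 0 = 1 := by
        intro n
        unfold qb
        rw [Nat.sub_zero, show E q 0 = 1 from Finset.prod_range_zero _, one_mul,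
          div_self (E_ne_zero hq0 hq1 n)]
      have hqbs : ∀ n, qb q n n = 1 := by
        intro n
        unfold qb
        rw [Nat.sub_self, show E q 0 = 1 from Finset.prod_range_zero _, mul_one,
          div_self (E_ne_zero hq0 hq1 n)]
      rcases Nat.eq_zero_or_pos j with rfl | hj1
      · rw [if_pos (Nat.zero_le m), if_neg (by omega), hqb0, hqb0, add_zero]
      rcases eq_or_lt_of_le hj2 with rfl | hjm
      · rw [if_neg (by omega), if_pos (by omega), hqbs, Nat.add_sub_cancel, hqbs,
          Nat.sub_self, pow_zero, zero_add]
        ring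
      · have hjm' : j ≤ m := by omega
        obtain ⟨i, rfl⟩ : ∃ i, j = i + 1 := ⟨j - 1, by omega⟩
        obtain ⟨k, hk⟩ : ∃ k, m = i + k + 1 := ⟨m - i - 1, by omega⟩
        subst hk
        rw [if_pos (by omega), if_pos (by omega)]
        have := pascal hq0 hq1 i k
        have e1 : i + k + 1 + 1 = i + k + 2 := by omega
        have e2 : i + k + 1 + 1 - (i + 1) = k + 1 := by omega
        rw [e1, e2, this, Nat.add_sub_cancel]
        ring
    rw [Finset.sum_congr rfl hsplit, Finset.sum_add_distrib]
    rw [Finset.sum_range_succ (fun j => if j ≤ m then A j * Bf (m + 1 - j) * qb q m j else 0),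
      if_neg (by omega)]
    rw [Finset.sum_range_succ' (fun j => if 1 ≤ j then
        A j * Bf (m + 1 - j) * (q ^ (m + 1 - j) * qb q m (j - 1)) else 0)]
    rw [if_neg (by omega)]
    have hterm : ∀ j ∈ Finset.range (m + 1),
        (if j ≤ m then A j * Bf (m + 1 - j) * qb q m j else 0)
          + (if 1 ≤ j + 1 then
              A (j + 1) * Bf (m + 1 - (j + 1)) * (q ^ (m + 1 - (j + 1)) * qb q m (j + 1 - 1))
             else 0)
          = (1 - ν * q ^ m) * (A j * Bf (m - j) * qb q m j) := by
      intro j hj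
      have hjm : j ≤ m := by simpa [Nat.lt_succ_iff] using hj
      rw [if_pos hjm, if_pos (by omega), Nat.add_sub_cancel]
      obtain ⟨k, rfl⟩ : ∃ k, m = j + k := ⟨m - j, by omega⟩
      have e1 : j + k + 1 - j = k + 1 := by omega
      have e2 : j + k + 1 - (j + 1) = k := by omega
      have e3 : j + k - j = k := by omega
      rw [e1, e2, e3]
      have hBs : Bf (k + 1) = Bf k * (1 - μ * q ^ k) := Finset.prod_range_succ _ _
      have hAs : A (j + 1) = A j * (μ - ν * q ^ j) := Finset.prod_range_succ _ _
      rw [hBs, hAs]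
      have hpow : q ^ k * q ^ j = q ^ (j + k) := by rw [← pow_add]; ring_nf
      linear_combination (-(A j * Bf k * qb q (j + k) j) * ν) * hpow
    simp only [add_zero]
    rw [← Finset.sum_add_distrib, Finset.sum_congr rfl hterm,
      ← Finset.mul_sum, ih, Finset.prod_range_succ]
    ring

end PhiAux

/-- the q-beta-binomial weights sum to one. -/
theorem phiBB_sum_to_one (q μ ν : ℝ) (hq0 : 0 ≤ q) (hq1 : q < 1) (m : ℕ)
    (hν : ∀ i : ℕ, i < m → ν * q ^ i ≠ 1) :
    ∑ j ∈ Finset.range (m + 1), phiBB q μ ν j m = 1 := by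
  classical
  have hE := PhiAux.E_ne_zero hq0 hq1
  have hC : (∏ i ∈ Finset.range m, (1 - ν * q ^ i)) ≠ 0 := by
    refine Finset.prod_ne_zero_iff.2 fun i hi => ?_
    have := hν i (Finset.mem_range.mp hi)
    intro h; apply this; linarith [sub_eq_zero.mp h]
  have hqq : ∀ n : ℕ, qPoch q q (n : ℤ) = PhiAux.E q n := by
    intro n
    simp only [qPoch, if_pos (Int.ofNat_nonneg n), Int.toNat_natCast, PhiAux.E]
    exact Finset.prod_congr rfl fun i _ => by rw [pow_succ']
  have hterm : ∀ j ∈ Finset.range (m + 1),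
      phiBB q μ ν j m
        = ((∏ i ∈ Finset.range j, (μ - ν * q ^ i)) *
            (∏ i ∈ Finset.range (m - j), (1 - μ * q ^ i)) * PhiAux.qb q m j)
          * (∏ i ∈ Finset.range m, (1 - ν * q ^ i))⁻¹ := by
    intro j hj
    have hjm : j ≤ m := by simpa [Nat.lt_succ_iff] using Finset.mem_range.mp hj
    have hsub : ((m : ℤ) - (j : ℤ)).toNat = m - j := by omega
    have hsubnn : (0 : ℤ) ≤ (m : ℤ) - (j : ℤ) := by omega
    rw [phiBB, if_pos hjm]
    rw [show qPoch μ q ((m : ℤ) - (j : ℤ))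
        = ∏ i ∈ Finset.range (m - j), (1 - μ * q ^ i) by
      rw [qPoch, if_pos hsubnn, hsub]]
    rw [show qPoch ν q (m : ℤ) = ∏ i ∈ Finset.range m, (1 - ν * q ^ i) by
      rw [qPoch, if_pos (Int.ofNat_nonneg m), Int.toNat_natCast]]
    rw [show qPoch q q ((m : ℤ) - (j : ℤ)) = PhiAux.E q (m - j) by
      rw [← hqq (m - j)]; congr 1; omega]
    rw [hqq m, hqq j, PhiAux.qb]
    field_simp
  rw [Finset.sum_congr rfl hterm, ← Finset.sum_mul, PhiAux.key q μ ν hq0 hq1 m,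
    mul_inv_cancel₀ hC]

end
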